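/- Let G be a connected simple graph with n vertices and let X be a nonempty proper subset of V(G) with |X| = n₁ such that the subgraph induced by X is the complete graph K_{n₁}. Then S_L(G) ≥ n₁(n − 1 − Δ(G))/(n − n₁), where Δ(G) is the maximum degree of G. -/

import Mathlib

open Finset Polynomial

/-- The number of edges of `G` with one endpoint in `X` and the other in `Xᶜ`
(each such edge corresponds to exactly one ordered pair in `X ×ˢ Xᶜ`). -/
def crossEdgeCard {n : ℕ} (G : SimpleGraph (Fin n)) [DecidableRel G.Adj]
    (X : Finset (Fin n)) : ℕ :=
  ((X ×ˢ Xᶜ).filter (fun p => G.Adj p.1 p.2)).card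

/-- The edge density `ρ_G(X) = n·|E_X(G)|/(|X|·|Xᶜ|)`. -/
noncomputable def edgeDensityR {n : ℕ} (G : SimpleGraph (Fin n)) [DecidableRel G.Adj]
    (X : Finset (Fin n)) : ℝ :=
  ((n : ℝ) * (crossEdgeCard G X : ℝ)) / ((X.card : ℝ) * ((Xᶜ : Finset (Fin n)).card : ℝ))

/-- `μ` is the (weakly decreasing) sequence of eigenvalues of the Laplacian matrix of `G`:
it is antitone and the characteristic polynomial of `L(G)` is `∏ i (x - μ i)`. -/
def IsLapEigSeq {n : ℕ} (G : SimpleGraph (Fin n)) [DecidableRel G.Adj]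
    (μ : Fin n → ℝ) : Prop :=
  (∀ i j : Fin n, i ≤ j → μ j ≤ μ i) ∧
    (G.lapMatrix ℝ).charpoly = ∏ i : Fin n, (X - C (μ i))

section Aux

open Matrix

variable {m : ℕ}

lemma aux_charpoly_unitary_conj (U A : Matrix (Fin m) (Fin m) ℝ)
    (h1 : U * Uᵀ = 1) :
    (U * A * Uᵀ).charpoly = A.charpoly := by
  have hc : ∀ M : Matrix (Fin m) (Fin m) ℝ,
      C.mapMatrix M * (Matrix.scalar (Fin m)) (X : ℝ[X]) =
        (Matrix.scalar (Fin m)) (X : ℝ[X]) * C.mapMatrix M := by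
    intro M
    exact (Matrix.scalar_commute (X : ℝ[X]) (fun r => Commute.all _ _) _).symm
  have key : charmatrix (U * A * Uᵀ) = C.mapMatrix U * charmatrix A * C.mapMatrix Uᵀ := by
    unfold charmatrix
    rw [Matrix.mul_sub, Matrix.sub_mul, _root_.map_mul, _root_.map_mul]
    congr 1
    rw [mul_assoc, ← hc, ← mul_assoc, ← _root_.map_mul, h1, _root_.map_one, one_mul]
  have hdet1 : (C.mapMatrix U).det * (C.mapMatrix Uᵀ).det = 1 := by
    rw [← Matrix.det_mul, ← _root_.map_mul, h1, _root_.map_one, Matrix.det_one]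
  unfold Matrix.charpoly
  rw [key, Matrix.det_mul, Matrix.det_mul]
  linear_combination A.charmatrix.det * hdet1

lemma aux_herm_star_eq (A : Matrix (Fin m) (Fin m) ℝ) (hA : A.IsHermitian) :
    star (hA.eigenvectorUnitary : Matrix (Fin m) (Fin m) ℝ) =
      (hA.eigenvectorUnitary : Matrix (Fin m) (Fin m) ℝ)ᵀ := by
  rw [show star (hA.eigenvectorUnitary : Matrix (Fin m) (Fin m) ℝ)
      = (hA.eigenvectorUnitary : Matrix (Fin m) (Fin m) ℝ)ᴴ from rfl,
    conjTranspose_eq_transpose_of_trivial]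

lemma aux_herm_spectral (A : Matrix (Fin m) (Fin m) ℝ) (hA : A.IsHermitian) :
    A = (hA.eigenvectorUnitary : Matrix (Fin m) (Fin m) ℝ) * Matrix.diagonal hA.eigenvalues *
      (hA.eigenvectorUnitary : Matrix (Fin m) (Fin m) ℝ)ᵀ := by
  have hd : Matrix.diagonal (RCLike.ofReal ∘ hA.eigenvalues) = Matrix.diagonal hA.eigenvalues := by
    congr 1
  rw [← hd, ← aux_herm_star_eq A hA]
  exact hA.spectral_theorem

lemma aux_herm_charpoly (A : Matrix (Fin m) (Fin m) ℝ) (hA : A.IsHermitian) :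
    A.charpoly = ∏ i : Fin m, (X - C (hA.eigenvalues i)) := by
  have h1 : (hA.eigenvectorUnitary : Matrix (Fin m) (Fin m) ℝ) *
      (hA.eigenvectorUnitary : Matrix (Fin m) (Fin m) ℝ)ᵀ = 1 := by
    rw [← aux_herm_star_eq A hA]
    exact (Matrix.mem_unitaryGroup_iff).mp hA.eigenvectorUnitary.2
  rw [congrArg Matrix.charpoly (aux_herm_spectral A hA), aux_charpoly_unitary_conj _ _ h1,
    Matrix.charpoly_of_upperTriangular _ (Matrix.blockTriangular_diagonal _)]
  simp

lemma aux_herm_rayleigh (A : Matrix (Fin m) (Fin m) ℝ) (hA : A.IsHermitian) (x : Fin m → ℝ) :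
    ((hA.eigenvectorUnitary : Matrix (Fin m) (Fin m) ℝ)ᵀ *ᵥ x) ⬝ᵥ
      ((hA.eigenvectorUnitary : Matrix (Fin m) (Fin m) ℝ)ᵀ *ᵥ x) = x ⬝ᵥ x ∧
    x ⬝ᵥ (A *ᵥ x) = ∑ i, hA.eigenvalues i *
      (((hA.eigenvectorUnitary : Matrix (Fin m) (Fin m) ℝ)ᵀ *ᵥ x) i)^2 := by
  set U : Matrix (Fin m) (Fin m) ℝ := (hA.eigenvectorUnitary : Matrix (Fin m) (Fin m) ℝ) with hUdef
  have h1 : U * Uᵀ = 1 := by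
    rw [← aux_herm_star_eq A hA]
    exact (Matrix.mem_unitaryGroup_iff).mp hA.eigenvectorUnitary.2
  have hspec : A = U * Matrix.diagonal hA.eigenvalues * Uᵀ := aux_herm_spectral A hA
  set y : Fin m → ℝ := Uᵀ *ᵥ x with hy
  constructor
  · calc y ⬝ᵥ y = x ⬝ᵥ (U *ᵥ (Uᵀ *ᵥ x)) := by
          rw [hy, Matrix.dotProduct_mulVec x U, Matrix.mulVec_transpose]
        _ = x ⬝ᵥ x := by rw [Matrix.mulVec_mulVec, h1, Matrix.one_mulVec]
  · calc x ⬝ᵥ (A *ᵥ x) = x ⬝ᵥ (U *ᵥ (Matrix.diagonal hA.eigenvalues *ᵥ y)) := by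
          rw [show U *ᵥ (Matrix.diagonal hA.eigenvalues *ᵥ y) = A *ᵥ x from by
            rw [hy, Matrix.mulVec_mulVec, Matrix.mulVec_mulVec, ← hspec]]
        _ = y ⬝ᵥ (Matrix.diagonal hA.eigenvalues *ᵥ y) := by
          rw [Matrix.dotProduct_mulVec x U, hy, Matrix.mulVec_transpose]
        _ = ∑ i, hA.eigenvalues i * (y i)^2 := by
          simp only [dotProduct, Matrix.mulVec_diagonal]
          exact Finset.sum_congr rfl fun i _ => by ring

end Aux

set_option maxHeartbeats 1000000 in
open Matrix in
/-- if the subgraph induced by a nonempty proper subset `X` with `|X| = n₁`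
is complete, then `S_L(G) ≥ n₁(n - 1 - Δ(G))/(n - n₁)`. -/
theorem laplacianSpread_ge_of_inducedComplete
    {n : ℕ} (hn : 2 ≤ n) (G : SimpleGraph (Fin n)) [DecidableRel G.Adj]
    (hG : G.Connected)
    (μ : Fin n → ℝ) (hμ : IsLapEigSeq G μ)
    (X : Finset (Fin n)) (hX : X.Nonempty) (hXp : X ≠ univ)
    (hXcomplete : ∀ u ∈ X, ∀ v ∈ X, u ≠ v → G.Adj u v)
    (n₁ : ℕ) (hn₁ : X.card = n₁) :
    (n₁ : ℝ) * ((n : ℝ) - 1 - (G.maxDegree : ℝ)) / ((n : ℝ) - (n₁ : ℝ))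
      ≤ μ ⟨0, by omega⟩ - μ ⟨n - 2, by omega⟩ := by
  classical
  set L : Matrix (Fin n) (Fin n) ℝ := G.lapMatrix ℝ with hLdef
  have hPSD : L.PosSemidef := SimpleGraph.posSemidef_lapMatrix ℝ G
  have hL : L.IsHermitian := hPSD.1
  set e : Fin n → ℝ := hL.eigenvalues with he
  -- multiset equality between μ and e
  have hms : Multiset.map μ Finset.univ.val = Multiset.map e Finset.univ.val := by
    have h1 : ∏ i : Fin n, (Polynomial.X - C (μ i)) = ∏ i : Fin n, (Polynomial.X - C (e i)) := by
      rw [← hμ.2]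
      exact aux_herm_charpoly L hL
    have h2 : ∀ f : Fin n → ℝ, ∏ i : Fin n, (Polynomial.X - C (f i)) =
        ((Multiset.map f Finset.univ.val).map (fun a => Polynomial.X - C a)).prod := by
      intro f
      rw [Multiset.map_map]
      rfl
    have := congrArg Polynomial.roots ((h2 μ).symm.trans (h1.trans (h2 e)))
    rwa [Polynomial.roots_multiset_prod_X_sub_C, Polynomial.roots_multiset_prod_X_sub_C] at this
  have hμe : ∀ i, ∃ j, μ j = e i := by
    intro i
    have : e i ∈ Multiset.map e Finset.univ.val :=
      Multiset.mem_map.2 ⟨i, Finset.mem_univ i, rfl⟩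
    rw [← hms] at this
    obtain ⟨j, _, hj⟩ := Multiset.mem_map.1 this
    exact ⟨j, hj⟩
  have heμ : ∀ j, ∃ i, e i = μ j := by
    intro j
    have : μ j ∈ Multiset.map μ Finset.univ.val :=
      Multiset.mem_map.2 ⟨j, Finset.mem_univ j, rfl⟩
    rw [hms] at this
    obtain ⟨i, _, hi⟩ := Multiset.mem_map.1 this
    exact ⟨i, hi⟩
  have hmono := hμ.1
  have henonneg : ∀ i, 0 ≤ e i := fun i => hPSD.eigenvalues_nonneg i
  -- there is a unique zero eigenvalue
  have hker : ∃! i₀ : Fin n, e i₀ = 0 := by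
    have hcard1 : Fintype.card G.ConnectedComponent = 1 := by
      refine Fintype.card_eq_one_iff.2 ⟨G.connectedComponentMk ⟨0, by omega⟩, fun c => ?_⟩
      refine c.ind (fun w => ?_)
      exact SimpleGraph.ConnectedComponent.eq.2 (hG.preconnected w ⟨0, by omega⟩)
    have hkerdim : Module.finrank ℝ (LinearMap.ker (Matrix.toLin' L)) = 1 := by
      rw [← SimpleGraph.card_connectedComponent_eq_finrank_ker_toLin'_lapMatrix, hcard1]
    have htoLin : Matrix.toLin' L = L.mulVecLin := by
      apply LinearMap.ext
      intro x
      simp [Matrix.toLin'_apply, Matrix.mulVecLin_apply]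
    have hrank : L.rank = n - 1 := by
      have hrn := LinearMap.finrank_range_add_finrank_ker L.mulVecLin
      rw [htoLin] at hkerdim
      rw [hkerdim] at hrn
      have hfr : Module.finrank ℝ (Fin n → ℝ) = n := by
        simp [Module.finrank_pi]
      rw [hfr] at hrn
      show Module.finrank ℝ (LinearMap.range L.mulVecLin) = n - 1
      omega
    have hcardnz : Fintype.card {i : Fin n // e i ≠ 0} = n - 1 := by
      rw [← hrank, hL.rank_eq_card_non_zero_eigs]
    have hle : Fintype.card {i : Fin n // e i = 0} ≤ n := by
      calc Fintype.card {i : Fin n // e i = 0} ≤ Fintype.card (Fin n) := Fintype.card_subtype_le _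
        _ = n := Fintype.card_fin n
    have hcompl := Fintype.card_subtype_compl (fun i : Fin n => e i = 0)
    rw [Fintype.card_fin] at hcompl
    have hcz : Fintype.card {i : Fin n // e i = 0} = 1 := by
      have : Fintype.card {i : Fin n // ¬ e i = 0} = Fintype.card {i : Fin n // e i ≠ 0} := rfl
      omega
    rw [Fintype.card_eq_one_iff] at hcz
    obtain ⟨⟨i₀, hi₀⟩, huniq⟩ := hcz
    exact ⟨i₀, hi₀, fun y hy => congrArg Subtype.val (huniq ⟨y, hy⟩)⟩
  obtain ⟨i₀, hi₀, hi₀uniq⟩ := hker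
  -- the eigenvector for the zero eigenvalue is a nonzero constant
  have hconst : ∃ c : ℝ, c ≠ 0 ∧ ∀ i, hL.eigenvectorBasis i₀ i = c := by
    have hv0 : Matrix.toLin' L ⇑(hL.eigenvectorBasis i₀) = 0 := by
      rw [Matrix.toLin'_apply, hL.mulVec_eigenvectorBasis i₀]
      rw [show hL.eigenvalues i₀ = 0 from hi₀]
      simp
    have hall := (SimpleGraph.lapMatrix_mulVec_eq_zero_iff_forall_reachable (G := G)).1
      (by rwa [Matrix.toLin'_apply] at hv0)
    refine ⟨hL.eigenvectorBasis i₀ ⟨0, by omega⟩, ?_, fun i =>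
      hall i ⟨0, by omega⟩ (hG.preconnected i ⟨0, by omega⟩)⟩
    intro hc
    refine hL.eigenvectorBasis.orthonormal.ne_zero i₀ ?_
    exact WithLp.ofLp_injective _ <| funext fun i =>
      (hall i ⟨0, by omega⟩ (hG.preconnected i ⟨0, by omega⟩)).trans hc
  -- μ at the last index is ≤ 0
  have hlast : μ ⟨n - 1, by omega⟩ ≤ 0 := by
    obtain ⟨j, hj⟩ := hμe i₀
    rw [hi₀] at hj
    calc μ ⟨n - 1, by omega⟩ ≤ μ j := hmono j ⟨n - 1, by omega⟩ (by
          rw [Fin.le_def]; simp; omega)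
      _ = 0 := hj
  -- each nonzero eigenvalue is at least μ (n-2)
  have hsecond : ∀ i, i ≠ i₀ → μ ⟨n - 2, by omega⟩ ≤ e i := by
    intro i hi
    have hne : e i ≠ 0 := fun h => hi (hi₀uniq i h)
    have hpos : 0 < e i := lt_of_le_of_ne (henonneg i) (Ne.symm hne)
    obtain ⟨j, hj⟩ := hμe i
    have hjne : (j : ℕ) ≠ n - 1 := by
      intro h
      have : j = ⟨n - 1, by omega⟩ := Fin.ext h
      rw [this] at hj
      have := hj ▸ hlast
      linarith
    have : j ≤ (⟨n - 2, by omega⟩ : Fin n) := by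
      rw [Fin.le_def]; simp; omega
    have h2 := hmono j ⟨n - 2, by omega⟩ this
    linarith [hj.le, hj.ge]
  -- Rayleigh quotient bounds
  set U : Matrix (Fin n) (Fin n) ℝ := (hL.eigenvectorUnitary : Matrix (Fin n) (Fin n) ℝ) with hU
  have hquad : ∀ z : Fin n → ℝ, dotProduct z (L *ᵥ z) =
      (∑ i, ∑ j, if G.Adj i j then (z i - z j)^2 else 0) / 2 := by
    intro z
    rw [← Matrix.toLinearMap₂'_apply', SimpleGraph.lapMatrix_toLinearMap₂']
  have hmax : ∀ x : Fin n → ℝ, dotProduct x (L *ᵥ x) ≤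
      μ ⟨0, by omega⟩ * dotProduct x x := by
    intro x
    obtain ⟨hxx, hxe⟩ := aux_herm_rayleigh L hL x
    rw [hxe, ← hxx]
    rw [show dotProduct (Uᵀ *ᵥ x) (Uᵀ *ᵥ x) = ∑ i, ((Uᵀ *ᵥ x) i)^2 from by
      simp [dotProduct, pow_two]]
    rw [Finset.mul_sum]
    refine Finset.sum_le_sum fun i _ => ?_
    have hle : e i ≤ μ ⟨0, by omega⟩ := by
      obtain ⟨j, hj⟩ := hμe i
      have := hmono ⟨0, by omega⟩ j (by rw [Fin.le_def]; simp)
      linarith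
    exact mul_le_mul_of_nonneg_right hle (sq_nonneg _)
  have hmin : ∀ x : Fin n → ℝ, (∑ j, x j) = 0 →
      μ ⟨n - 2, by omega⟩ * dotProduct x x ≤ dotProduct x (L *ᵥ x) := by
    intro x hsum
    obtain ⟨hxx, hxe⟩ := aux_herm_rayleigh L hL x
    obtain ⟨c, hc0, hcall⟩ := hconst
    have hyi₀ : (Uᵀ *ᵥ x) i₀ = 0 := by
      have h1 : (Uᵀ *ᵥ x) i₀ = ∑ j, hL.eigenvectorBasis i₀ j * x j := by
        simp only [Matrix.mulVec, dotProduct, Matrix.transpose_apply]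
        refine Finset.sum_congr rfl fun j _ => ?_
        rfl
      rw [h1]
      simp_rw [hcall]
      rw [← Finset.mul_sum, hsum, mul_zero]
    rw [hxe, ← hxx]
    rw [show dotProduct (Uᵀ *ᵥ x) (Uᵀ *ᵥ x) = ∑ i, ((Uᵀ *ᵥ x) i)^2 from by
      simp [dotProduct, pow_two]]
    rw [Finset.mul_sum, ← sub_nonneg, ← Finset.sum_sub_distrib]
    refine Finset.sum_nonneg fun i _ => ?_
    rcases eq_or_ne i i₀ with h | h
    · rw [h, hyi₀]
      simp
    · have := hsecond i h
      nlinarith [sq_nonneg ((Uᵀ *ᵥ x) i)]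
  -- μ₁ ≥ Δ + 1 using a test vector
  have hmu0 : (G.maxDegree : ℝ) + 1 ≤ μ ⟨0, by omega⟩ := by
    have hNE : Nonempty (Fin n) := ⟨⟨0, by omega⟩⟩
    obtain ⟨v, hv⟩ := G.exists_maximal_degree_vertex
    obtain ⟨w, hw⟩ := Fintype.exists_ne_of_one_lt_card (by rw [Fintype.card_fin]; omega) v
    have hdeg1 : 0 < G.degree v := by
      rw [SimpleGraph.degree_pos_iff_exists_adj]
      obtain ⟨p⟩ := hG.preconnected v w
      cases p with
      | nil => exact absurd rfl hw
      | cons h _ => exact ⟨_, h⟩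
    set d : ℝ := (G.degree v : ℝ) with hd
    have hdR : 1 ≤ d := by rw [hd]; exact_mod_cast hdeg1
    set x : Fin n → ℝ := fun i => if i = v then d else if G.Adj v i then -1 else 0 with hx
    have hxv : x v = d := by simp [hx]
    have hxadj : ∀ i, G.Adj v i → x i = -1 := by
      intro i h
      have hne : i ≠ v := fun hiv => G.irrefl (hiv ▸ h)
      simp [hx, hne, h]
    have hxx : dotProduct x x = d^2 + d := by
      have h1 : ∀ i ∈ Finset.univ.erase v, x i * x i = (if G.Adj v i then (1:ℝ) else 0) := by
        intro i hi
        have hne : i ≠ v := Finset.ne_of_mem_erase hi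
        by_cases h : G.Adj v i
        · rw [hxadj i h, if_pos h]; ring
        · simp [hx, hne, h]
      calc dotProduct x x
          = x v * x v + ∑ i ∈ Finset.univ.erase v, x i * x i :=
            (Finset.add_sum_erase _ _ (Finset.mem_univ v)).symm
        _ = d^2 + d := by
            rw [Finset.sum_congr rfl h1, Finset.sum_erase _ (by simp [G.irrefl]),
              ← SimpleGraph.degree_eq_sum_if_adj, hxv, ← hd]
            ring
    set t : Fin n → Fin n → ℝ := fun i j => if G.Adj i j then (x i - x j)^2 else 0 with ht
    have htnn : ∀ i j, 0 ≤ t i j := by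
      intro i j
      rw [ht]
      dsimp only
      split
      · positivity
      · exact le_refl 0
    have htv : ∀ j, t v j = if G.Adj v j then (d+1)^2 else 0 := by
      intro j
      by_cases h : G.Adj v j
      · rw [ht]; dsimp only; rw [if_pos h, if_pos h, hxv, hxadj j h]; ring
      · rw [ht]; dsimp only; rw [if_neg h, if_neg h]
    have htv' : ∀ i, t i v = if G.Adj v i then (d+1)^2 else 0 := by
      intro i
      by_cases h : G.Adj v i
      · rw [ht]; dsimp only; rw [if_pos (G.adj_symm h), if_pos h, hxv, hxadj i h]; ring
      · rw [ht]; dsimp only; rw [if_neg (fun h' => h (G.adj_symm h')), if_neg h]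
    have hsum_if : ∑ j, (if G.Adj v j then ((d:ℝ)+1)^2 else 0) = d * (d+1)^2 := by
      have h2 : ∀ j, (if G.Adj v j then ((d:ℝ)+1)^2 else 0) =
          (if G.Adj v j then (1:ℝ) else 0) * (d+1)^2 := by
        intro j; split <;> ring
      rw [Finset.sum_congr rfl fun j _ => h2 j, ← Finset.sum_mul,
        ← SimpleGraph.degree_eq_sum_if_adj, ← hd]
    have hdouble : 2 * (d * (d+1)^2) ≤ ∑ i, ∑ j, t i j := by
      have hstep : (∑ j, t v j) + ∑ i ∈ Finset.univ.erase v, t i v ≤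
          (∑ j, t v j) + ∑ i ∈ Finset.univ.erase v, ∑ j, t i j := by
        refine add_le_add le_rfl (Finset.sum_le_sum fun i _ => ?_)
        exact Finset.single_le_sum (fun j _ => htnn i j) (Finset.mem_univ v)
      have hsplit : ∑ i, ∑ j, t i j =
          (∑ j, t v j) + ∑ i ∈ Finset.univ.erase v, ∑ j, t i j :=
        (Finset.add_sum_erase _ _ (Finset.mem_univ v)).symm
      have herase : ∑ i ∈ Finset.univ.erase v, t i v = ∑ i, t i v :=
        Finset.sum_erase _ (by rw [ht]; simp [G.irrefl])
      have hv1 : ∑ j, t v j = d * (d+1)^2 := by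
        rw [Finset.sum_congr rfl fun j _ => htv j, hsum_if]
      have hv2 : ∑ i, t i v = d * (d+1)^2 := by
        rw [Finset.sum_congr rfl fun i _ => htv' i, hsum_if]
      rw [hsplit]
      calc 2 * (d * (d+1)^2) = (∑ j, t v j) + ∑ i ∈ Finset.univ.erase v, t i v := by
            rw [herase, hv1, hv2]; ring
        _ ≤ _ := hstep
    have hform : d * (d+1)^2 ≤ dotProduct x (L *ᵥ x) := by
      rw [hquad x]
      rw [show (∑ i, ∑ j, if G.Adj i j then (x i - x j)^2 else 0) = ∑ i, ∑ j, t i j from rfl]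
      linarith
    have hfin := hmax x
    rw [hxx] at hfin
    have hmu : d + 1 ≤ μ ⟨0, by omega⟩ := by nlinarith
    rw [hv]
    exact hmu
  -- setup for the second test vector
  have hkn : n₁ < n := by
    have hss : X ⊂ Finset.univ := Finset.ssubset_univ_iff.2 hXp
    have := Finset.card_lt_card hss
    rwa [Finset.card_univ, Fintype.card_fin, hn₁] at this
  have hk1 : 1 ≤ n₁ := hn₁ ▸ Finset.card_pos.2 hX
  set N : ℝ := (n : ℝ) with hN
  set k : ℝ := (n₁ : ℝ) with hk
  set D : ℝ := (G.maxDegree : ℝ) with hD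
  have hkR : 1 ≤ k := by rw [hk]; exact_mod_cast hk1
  have hNk : 0 < N - k := by
    rw [hN, hk]
    have : (n₁ : ℝ) < (n : ℝ) := by exact_mod_cast hkn
    linarith
  have hXcard : (X.card : ℝ) = k := by rw [hn₁, hk]
  have hXccard : ((Xᶜ : Finset (Fin n)).card : ℝ) = N - k := by
    rw [Finset.card_compl, Fintype.card_fin, hn₁, Nat.cast_sub hkn.le, hN, hk]
  set x2 : Fin n → ℝ := fun i => if i ∈ X then N - k else -k with hx2
  have hx2X : ∀ i ∈ X, x2 i = N - k := fun i hi => if_pos hi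
  have hx2c : ∀ i ∈ (Xᶜ : Finset (Fin n)), x2 i = -k := fun i hi =>
    if_neg (Finset.mem_compl.1 hi)
  have hsum2 : ∑ j, x2 j = 0 := by
    rw [← Finset.sum_add_sum_compl X]
    have hXsum : ∑ i ∈ X, x2 i = ∑ _i ∈ X, (N-k) := Finset.sum_congr rfl hx2X
    have hXcsum : ∑ i ∈ (Xᶜ : Finset (Fin n)), x2 i = ∑ _i ∈ (Xᶜ : Finset (Fin n)), (-k) :=
      Finset.sum_congr rfl hx2c
    rw [hXsum, hXcsum, Finset.sum_const, Finset.sum_const, nsmul_eq_mul, nsmul_eq_mul,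
      hXcard, hXccard]
    ring
  have hxx2 : dotProduct x2 x2 = k * (N - k) * N := by
    unfold dotProduct
    rw [← Finset.sum_add_sum_compl X]
    have hXsum : ∑ i ∈ X, x2 i * x2 i = ∑ _i ∈ X, (N-k)*(N-k) :=
      Finset.sum_congr rfl fun i hi => by rw [hx2X i hi]
    have hXcsum : ∑ i ∈ (Xᶜ : Finset (Fin n)), x2 i * x2 i =
        ∑ _i ∈ (Xᶜ : Finset (Fin n)), (-k)*(-k) :=
      Finset.sum_congr rfl fun i hi => by rw [hx2c i hi]
    rw [hXsum, hXcsum, Finset.sum_const, Finset.sum_const, nsmul_eq_mul, nsmul_eq_mul,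
      hXcard, hXccard]
    ring
  -- cross edge count as a double sum
  have hE : (crossEdgeCard G X : ℝ) =
      ∑ i, ∑ j, (if i ∈ X ∧ j ∈ Xᶜ ∧ G.Adj i j then (1:ℝ) else 0) := by
    have h1 : ∀ i : Fin n, ∑ j, (if i ∈ X ∧ j ∈ Xᶜ ∧ G.Adj i j then (1:ℝ) else 0) =
        if i ∈ X then ∑ j, (if j ∈ Xᶜ ∧ G.Adj i j then (1:ℝ) else 0) else 0 := by
      intro i
      by_cases hi : i ∈ X <;> simp [hi]
    rw [Finset.sum_congr rfl fun i _ => h1 i, Finset.sum_ite_mem, Finset.univ_inter]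
    have h2 : ∀ i ∈ X, ∑ j, (if j ∈ Xᶜ ∧ G.Adj i j then (1:ℝ) else 0) =
        ∑ j ∈ Xᶜ, (if G.Adj i j then (1:ℝ) else 0) := by
      intro i _
      rw [show (Xᶜ : Finset (Fin n)) = Finset.univ ∩ Xᶜ from (Finset.univ_inter _).symm,
        ← Finset.sum_ite_mem]
      refine Finset.sum_congr rfl fun j hj => ?_
      by_cases h : j ∈ Xᶜ <;> simp [h]
    rw [Finset.sum_congr rfl h2]
    unfold crossEdgeCard
    rw [Finset.card_filter]
    push_cast
    rw [Finset.sum_product]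
  have hform2 : dotProduct x2 (L *ᵥ x2) = N^2 * (crossEdgeCard G X : ℝ) := by
    rw [hquad x2]
    have hterm : ∀ i j : Fin n, (if G.Adj i j then (x2 i - x2 j)^2 else 0) =
        (if i ∈ X ∧ j ∈ Xᶜ ∧ G.Adj i j then N^2 else 0) +
        (if j ∈ X ∧ i ∈ Xᶜ ∧ G.Adj i j then N^2 else 0) := by
      intro i j
      by_cases hij : G.Adj i j
      · by_cases hiX : i ∈ X <;> by_cases hjX : j ∈ X <;>
          simp [hx2, hiX, hjX, hij, Finset.mem_compl] <;> ring
      · simp [hij]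
    rw [Finset.sum_congr rfl fun i _ => Finset.sum_congr rfl fun j _ => hterm i j]
    have hsplit : ∑ i, ∑ j, ((if i ∈ X ∧ j ∈ Xᶜ ∧ G.Adj i j then N^2 else 0) +
        (if j ∈ X ∧ i ∈ Xᶜ ∧ G.Adj i j then N^2 else 0)) =
        (∑ i, ∑ j, (if i ∈ X ∧ j ∈ Xᶜ ∧ G.Adj i j then N^2 else 0)) +
        (∑ i, ∑ j, (if j ∈ X ∧ i ∈ Xᶜ ∧ G.Adj i j then N^2 else 0)) := by
      rw [← Finset.sum_add_distrib]
      exact Finset.sum_congr rfl fun i _ => Finset.sum_add_distrib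
    rw [hsplit]
    have hcnt : ∀ P : Fin n → Fin n → Prop, ∀ _ : DecidablePred fun p : Fin n × Fin n => P p.1 p.2,
        True := fun _ _ => trivial
    have hval : ∀ (Q : Fin n → Fin n → Prop) [∀ i j, Decidable (Q i j)],
        ∑ i, ∑ j, (if Q i j then N^2 else 0) =
          N^2 * ∑ i, ∑ j, (if Q i j then (1:ℝ) else 0) := by
      intro Q _
      rw [Finset.mul_sum]
      refine Finset.sum_congr rfl fun i _ => ?_
      rw [Finset.mul_sum]
      refine Finset.sum_congr rfl fun j _ => ?_
      split <;> ring
    rw [hval, hval]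
    have hswap : ∑ i, ∑ j, (if j ∈ X ∧ i ∈ Xᶜ ∧ G.Adj i j then (1:ℝ) else 0) =
        ∑ i, ∑ j, (if i ∈ X ∧ j ∈ Xᶜ ∧ G.Adj i j then (1:ℝ) else 0) := by
      rw [Finset.sum_comm]
      refine Finset.sum_congr rfl fun i _ => Finset.sum_congr rfl fun j _ => ?_
      congr 1
      · simp only [eq_iff_iff]
        constructor
        · rintro ⟨h1, h2, h3⟩; exact ⟨h1, h2, G.adj_symm h3⟩
        · rintro ⟨h1, h2, h3⟩; exact ⟨h1, h2, G.adj_symm h3⟩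
    rw [hswap, ← hE]
    ring
  -- bound on the number of cross edges
  have hEbound : (crossEdgeCard G X : ℝ) ≤ k * (D - k + 1) := by
    have hcE : crossEdgeCard G X = ∑ u ∈ X, (Xᶜ.filter (fun j => G.Adj u j)).card := by
      unfold crossEdgeCard
      rw [Finset.card_filter, Finset.sum_product]
      exact Finset.sum_congr rfl fun u _ => (Finset.card_filter _ _).symm
    have hvert : ∀ u ∈ X, (Xᶜ.filter (fun j => G.Adj u j)).card + (n₁ - 1) ≤ G.maxDegree := by
      intro u hu
      have hpart := Finset.card_filter_add_card_filter_not
        (s := G.neighborFinset u) (p := fun j => j ∈ X)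
      have hXsub : X.erase u ⊆ (G.neighborFinset u).filter (fun j => j ∈ X) := by
        intro j hj
        rw [Finset.mem_filter, SimpleGraph.mem_neighborFinset]
        exact ⟨G.adj_symm (hXcomplete j (Finset.mem_of_mem_erase hj) u hu
          (Finset.ne_of_mem_erase hj)), Finset.mem_of_mem_erase hj⟩
      have hXc : n₁ - 1 ≤ ((G.neighborFinset u).filter (fun j => j ∈ X)).card := by
        have := Finset.card_le_card hXsub
        rwa [Finset.card_erase_of_mem hu, hn₁] at this
      have heq : (Xᶜ.filter (fun j => G.Adj u j)).card =
          ((G.neighborFinset u).filter (fun j => ¬ j ∈ X)).card := by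
        congr 1
        ext j
        simp only [Finset.mem_filter, Finset.mem_compl, SimpleGraph.mem_neighborFinset]
        tauto
      have hdeg : (G.neighborFinset u).card = G.degree u := rfl
      have hdegmax := G.degree_le_maxDegree u
      omega
    calc (crossEdgeCard G X : ℝ)
        = ∑ u ∈ X, ((Xᶜ.filter (fun j => G.Adj u j)).card : ℝ) := by
          rw [hcE]; push_cast; rfl
      _ ≤ ∑ u ∈ X, (D - k + 1) := by
          refine Finset.sum_le_sum fun u hu => ?_
          have h := hvert u hu
          have hcast : ((Xᶜ.filter (fun j => G.Adj u j)).card : ℝ) + (k - 1) ≤ D := by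
            rw [hk, hD, ← Nat.cast_pred (by omega), ← Nat.cast_add]
            exact_mod_cast h
          linarith
      _ = k * (D - k + 1) := by rw [Finset.sum_const, nsmul_eq_mul, hXcard]
  -- assemble everything
  have hB := hmin x2 hsum2
  rw [hxx2, hform2] at hB
  have hNpos : (0:ℝ) < N := by rw [hN]; exact_mod_cast (by omega : 0 < n)
  have hkpos : (0:ℝ) < k := by linarith
  have hB2 : μ ⟨n - 2, by omega⟩ * (N - k) ≤ N * (D - k + 1) := by
    have hkN : (0:ℝ) < k * N := by positivity
    refine le_of_mul_le_mul_right ?_ hkN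
    have h3 : N^2 * (crossEdgeCard G X : ℝ) ≤ N^2 * (k * (D - k + 1)) :=
      mul_le_mul_of_nonneg_left hEbound (by positivity)
    calc μ ⟨n - 2, by omega⟩ * (N - k) * (k * N)
        = μ ⟨n - 2, by omega⟩ * (k * (N - k) * N) := by ring
      _ ≤ N^2 * (crossEdgeCard G X : ℝ) := hB
      _ ≤ N^2 * (k * (D - k + 1)) := h3
      _ = N * (D - k + 1) * (k * N) := by ring
  rw [div_le_iff₀ hNk]
  linarith [mul_le_mul_of_nonneg_right hmu0 hNk.le, hB2]
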